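/- Let $\theta_l, \theta_r > 0$, $\rho_l = \frac{2\sqrt{\theta_r}}{\sqrt{\theta_l}+\sqrt{\theta_r}}$, $\rho_r = \frac{2\sqrt{\theta_l}}{\sqrt{\theta_l}+\sqrt{\theta_r}}$, and let $f(c) = \frac{\rho_l}{\sqrt{2\pi\theta_l}} e^{-c^2/(2\theta_l)}$ for $c > 0$, $f(c) = \frac{\rho_r}{\sqrt{2\pi\theta_r}} e^{-c^2/(2\theta_r)}$ for $c < 0$. Then the temperature of $f$ equals the geometric mean of the wall temperatures: $\int_{\mathbb{R}} c^2 f(c)\,dc \Big/ \int_{\mathbb{R}} f(c)\,dc = \sqrt{\theta_l\,\theta_r}$. -/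

import Mathlib

open MeasureTheory Real Set Filter Topology

lemma sq_gauss_Ioi {b : ℝ} (hb : 0 < b) :
    ∫ x in Ioi (0:ℝ), x ^ 2 * Real.exp (-b * x ^ 2) = Real.sqrt (Real.pi / b) / (4 * b) := by
  have hb' : (2:ℝ) * b ≠ 0 := by positivity
  have hint2 : Integrable (fun x : ℝ => x ^ 2 * Real.exp (-b * x ^ 2)) := by
    simpa [Real.rpow_two] using integrable_rpow_mul_exp_neg_mul_sq hb (s := 2) (by norm_num)
  have hderiv : ∀ x ∈ Ioi (0:ℝ), HasDerivAt (fun x : ℝ => -(x * Real.exp (-b * x ^ 2)) / (2 * b))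
      (x ^ 2 * Real.exp (-b * x ^ 2) - Real.exp (-b * x ^ 2) / (2 * b)) x := by
    intro x _
    have hx2 : HasDerivAt (fun x : ℝ => -b * x ^ 2) (-b * (2 * x)) x := by
      simpa using (hasDerivAt_pow 2 x).const_mul (-b)
    have he := hx2.exp
    have hmul := (hasDerivAt_id' x).fun_mul he
    have := (hmul.fun_neg).div_const (2 * b)
    refine this.congr_deriv ?_
    field_simp
    ring
  have hcont : ContinuousWithinAt (fun x : ℝ => -(x * Real.exp (-b * x ^ 2)) / (2 * b))
      (Ici (0:ℝ)) 0 := by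
    apply Continuous.continuousWithinAt
    continuity
  have htend : Tendsto (fun x : ℝ => -(x * Real.exp (-b * x ^ 2)) / (2 * b)) atTop (𝓝 0) := by
    have h1 : Tendsto (fun x : ℝ => x * Real.exp (-b * x ^ 2)) atTop (𝓝 0) := by
      have ho := rpow_mul_exp_neg_mul_sq_isLittleO_exp_neg hb 1
      simp only [Real.rpow_one] at ho
      apply ho.tendsto_zero_of_tendsto
      have h2 := Real.tendsto_exp_neg_atTop_nhds_zero.comp
        (tendsto_id.const_mul_atTop (show (0:ℝ) < 1/2 by norm_num))
      simpa only [Function.comp_def, neg_mul, id] using h2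
    have := (h1.div_const (2 * b)).neg
    simpa [neg_div] using this
  have hint' : IntegrableOn (fun x : ℝ =>
      x ^ 2 * Real.exp (-b * x ^ 2) - Real.exp (-b * x ^ 2) / (2 * b)) (Ioi 0) :=
    (hint2.integrableOn.sub ((integrable_exp_neg_mul_sq hb).integrableOn.div_const _))
  have key := integral_Ioi_of_hasDerivAt_of_tendsto hcont hderiv hint' htend
  rw [integral_sub hint2.integrableOn ((integrable_exp_neg_mul_sq hb).integrableOn.div_const _)]
    at key
  simp only [neg_zero, mul_zero, zero_mul, zero_div, sub_zero, zero_sub, neg_neg,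
    Real.exp_zero, mul_one, neg_div] at key
  have key2 : ∫ x in Ioi (0:ℝ), x ^ 2 * Real.exp (-b * x ^ 2)
      = ∫ x in Ioi (0:ℝ), Real.exp (-b * x ^ 2) / (2 * b) := by linarith [key]
  rw [key2, integral_div, integral_gaussian_Ioi, div_div,
    show (2:ℝ) * (2 * b) = 4 * b from by ring]

lemma aux_form (x θ : ℝ) : -x ^ 2 / (2 * θ) = -(2 * θ)⁻¹ * x ^ 2 := by ring

lemma aux_int {θ : ℝ} (hθ : 0 < θ) (ρ : ℝ) :
    Integrable (fun x : ℝ => ρ / Real.sqrt (2 * Real.pi * θ) * Real.exp (-x ^ 2 / (2 * θ))) := by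
  have hb : (0:ℝ) < (2 * θ)⁻¹ := by positivity
  simp_rw [aux_form]
  exact (integrable_exp_neg_mul_sq hb).const_mul _

lemma aux_int_sq {θ : ℝ} (hθ : 0 < θ) (ρ : ℝ) :
    Integrable (fun x : ℝ =>
      x ^ 2 * (ρ / Real.sqrt (2 * Real.pi * θ) * Real.exp (-x ^ 2 / (2 * θ)))) := by
  have hb : (0:ℝ) < (2 * θ)⁻¹ := by positivity
  have h2 : Integrable (fun x : ℝ => x ^ 2 * Real.exp (-(2 * θ)⁻¹ * x ^ 2)) := by
    simpa [Real.rpow_two] using integrable_rpow_mul_exp_neg_mul_sq hb (s := 2) (by norm_num)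
  have hfun : (fun x : ℝ => x ^ 2 * (ρ / Real.sqrt (2 * Real.pi * θ) * Real.exp (-x ^ 2 / (2 * θ))))
      = fun x => ρ / Real.sqrt (2 * Real.pi * θ) * (x ^ 2 * Real.exp (-(2 * θ)⁻¹ * x ^ 2)) := by
    funext x
    rw [aux_form]
    ring
  rw [hfun]
  exact h2.const_mul _

lemma aux_mass {θ : ℝ} (hθ : 0 < θ) (ρ : ℝ) :
    ∫ x in Ioi (0:ℝ), ρ / Real.sqrt (2 * Real.pi * θ) * Real.exp (-x ^ 2 / (2 * θ)) = ρ / 2 := by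
  have hb : (0:ℝ) < (2 * θ)⁻¹ := by positivity
  have hS : Real.sqrt (2 * Real.pi * θ) ≠ 0 := by positivity
  simp_rw [aux_form]
  rw [MeasureTheory.integral_const_mul, integral_gaussian_Ioi, div_inv_eq_mul,
    show Real.pi * (2 * θ) = 2 * Real.pi * θ from by ring,
    ← mul_div_assoc, div_mul_cancel₀ ρ hS]

lemma aux_mom {θ : ℝ} (hθ : 0 < θ) (ρ : ℝ) :
    ∫ x in Ioi (0:ℝ), x ^ 2 * (ρ / Real.sqrt (2 * Real.pi * θ) * Real.exp (-x ^ 2 / (2 * θ)))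
      = ρ * θ / 2 := by
  have hb : (0:ℝ) < (2 * θ)⁻¹ := by positivity
  have hS : Real.sqrt (2 * Real.pi * θ) ≠ 0 := by positivity
  have hfun : (fun x : ℝ => x ^ 2 * (ρ / Real.sqrt (2 * Real.pi * θ) * Real.exp (-x ^ 2 / (2 * θ))))
      = fun x => ρ / Real.sqrt (2 * Real.pi * θ) * (x ^ 2 * Real.exp (-(2 * θ)⁻¹ * x ^ 2)) := by
    funext x
    rw [aux_form]
    ring
  rw [hfun]
  rw [MeasureTheory.integral_const_mul, sq_gauss_Ioi hb, div_inv_eq_mul,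
    show Real.pi * (2 * θ) = 2 * Real.pi * θ from by ring,
    ← mul_div_assoc, div_mul_cancel₀ ρ hS,
    show (4:ℝ) * (2 * θ)⁻¹ = 2 / θ from by field_simp; ring,
    div_div_eq_mul_div]

/-- **Temperature of the free-molecular solution.** The piecewise half-Maxwellian
free-molecular distribution between walls of temperatures `θ_l, θ_r` has temperature equal
to the geometric mean `√(θ_l θ_r)` of the wall temperatures. -/
theorem free_molecular_temperature
    (θl θr : ℝ) (hθl : 0 < θl) (hθr : 0 < θr)
    (ρl ρr : ℝ)
    (hρl : ρl = 2 * Real.sqrt θr / (Real.sqrt θl + Real.sqrt θr))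
    (hρr : ρr = 2 * Real.sqrt θl / (Real.sqrt θl + Real.sqrt θr))
    (f : ℝ → ℝ)
    (hfp : ∀ c : ℝ, 0 < c →
        f c = ρl / Real.sqrt (2 * Real.pi * θl) * Real.exp (-c ^ 2 / (2 * θl)))
    (hfn : ∀ c : ℝ, c < 0 →
        f c = ρr / Real.sqrt (2 * Real.pi * θr) * Real.exp (-c ^ 2 / (2 * θr))) :
    (∫ c : ℝ, c ^ 2 * f c) / (∫ c : ℝ, f c) = Real.sqrt (θl * θr) := by
  set gl : ℝ → ℝ := fun c => ρl / Real.sqrt (2 * Real.pi * θl) * Real.exp (-c ^ 2 / (2 * θl))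
    with hgl
  set gr : ℝ → ℝ := fun c => ρr / Real.sqrt (2 * Real.pi * θr) * Real.exp (-c ^ 2 / (2 * θr))
    with hgr
  have hne0 : ∀ᵐ x : ℝ, x ≠ (0:ℝ) := by
    rw [ae_iff]
    simp
  -- a.e. equalities on the two half lines
  have haep : (fun c : ℝ => c ^ 2 * f c) =ᵐ[volume.restrict (Ioi (0:ℝ))]
      fun c => c ^ 2 * gl c := by
    filter_upwards [ae_restrict_mem measurableSet_Ioi] with x hx
    rw [hfp x hx]
  have haep' : f =ᵐ[volume.restrict (Ioi (0:ℝ))] gl := by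
    filter_upwards [ae_restrict_mem measurableSet_Ioi] with x hx
    rw [hfp x hx]
  have haen : (fun c : ℝ => c ^ 2 * f c) =ᵐ[volume.restrict (Iic (0:ℝ))]
      fun c => c ^ 2 * gr c := by
    filter_upwards [ae_restrict_mem measurableSet_Iic,
      ae_mono Measure.restrict_le_self hne0] with x hx hx0
    rw [hfn x (lt_of_le_of_ne hx hx0)]
  have haen' : f =ᵐ[volume.restrict (Iic (0:ℝ))] gr := by
    filter_upwards [ae_restrict_mem measurableSet_Iic,
      ae_mono Measure.restrict_le_self hne0] with x hx hx0
    rw [hfn x (lt_of_le_of_ne hx hx0)]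
  -- integrability
  have hip : IntegrableOn (fun c : ℝ => c ^ 2 * f c) (Ioi 0) :=
    ((aux_int_sq hθl ρl).integrableOn).congr haep.symm
  have hin : IntegrableOn (fun c : ℝ => c ^ 2 * f c) (Iic 0) :=
    ((aux_int_sq hθr ρr).integrableOn).congr haen.symm
  have hip' : IntegrableOn f (Ioi 0) := ((aux_int hθl ρl).integrableOn).congr haep'.symm
  have hin' : IntegrableOn f (Iic 0) := ((aux_int hθr ρr).integrableOn).congr haen'.symm
  -- reflect the negative half line
  have hrefl : ∫ x in Iic (0:ℝ), x ^ 2 * gr x = ∫ x in Ioi (0:ℝ), x ^ 2 * gr x := by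
    have h := integral_comp_neg_Iic (0:ℝ) (fun x => x ^ 2 * gr x)
    simp only [neg_zero] at h
    rw [← h]
    congr 1
    funext x
    simp [hgr, neg_sq]
  have hrefl' : ∫ x in Iic (0:ℝ), gr x = ∫ x in Ioi (0:ℝ), gr x := by
    have h := integral_comp_neg_Iic (0:ℝ) gr
    simp only [neg_zero] at h
    rw [← h]
    congr 1
    funext x
    simp [hgr, neg_sq]
  -- compute the two integrals
  have hnum : (∫ c : ℝ, c ^ 2 * f c) = ρr * θr / 2 + ρl * θl / 2 := by
    rw [← intervalIntegral.integral_Iic_add_Ioi hin hip, integral_congr_ae haen, integral_congr_ae haep,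
      hrefl, aux_mom hθr ρr, aux_mom hθl ρl]
  have hden : (∫ c : ℝ, f c) = ρr / 2 + ρl / 2 := by
    rw [← intervalIntegral.integral_Iic_add_Ioi hin' hip', integral_congr_ae haen', integral_congr_ae haep',
      hrefl', aux_mass hθr ρr, aux_mass hθl ρl]
  rw [hnum, hden, hρl, hρr, Real.sqrt_mul hθl.le]
  have hsl : 0 < Real.sqrt θl := Real.sqrt_pos.mpr hθl
  have hsr : 0 < Real.sqrt θr := Real.sqrt_pos.mpr hθr
  have hs : Real.sqrt θl + Real.sqrt θr ≠ 0 := by positivity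
  field_simp
  linear_combination (-Real.sqrt θl) * Real.sq_sqrt hθr.le +
    (-Real.sqrt θr) * Real.sq_sqrt hθl.le
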